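/- Let R be a commutative semilocal ring, let S be a (not necessarily commutative) R-algebra, and let M be an S-module which is finitely generated as an R-module. Then the endomorphism ring End_S(M) is semilocal. -/

import Mathlib

/-- A ring is semilocal if its quotient by the Jacobson radical is a semisimple
(artinian) ring. -/
def IsSemilocalRing (R : Type*) [Ring R] : Prop :=
  IsSemisimpleRing (TwoSidedIdeal.jacobson (⊥ : TwoSidedIdeal R)).ringCon.Quotient


section Helpers

variable {B C : Type*} [Ring B] [Ring C]

lemma aux_isUnit_of_left_right {u l r : B} (hl : l * u = 1) (hr : u * r = 1) : IsUnit u := by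
  have hlr : l = r := by rw [← one_mul r, ← hl, mul_assoc, hr, mul_one]
  exact ⟨⟨u, r, hr, by rw [← hlr, hl]⟩, rfl⟩

lemma aux_mem_jacobson_bot_iff {x : B} :
    x ∈ TwoSidedIdeal.jacobson (⊥ : TwoSidedIdeal B) ↔ ∀ y, IsUnit (1 + y * x) := by
  constructor
  · intro hx y
    obtain ⟨z, hz⟩ := TwoSidedIdeal.mem_jacobson_iff.1 hx y
    rw [TwoSidedIdeal.mem_bot, sub_eq_zero] at hz
    have hz1 : z * (1 + y * x) = 1 := by
      rw [mul_add, mul_one, ← mul_assoc, add_comm]; exact hz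
    obtain ⟨w, hw⟩ := TwoSidedIdeal.mem_jacobson_iff.1 hx (-(z * y))
    rw [TwoSidedIdeal.mem_bot, sub_eq_zero] at hw
    have hwz : w * z = 1 := by
      have hz2 : z = 1 - z * y * x := by
        rw [eq_sub_iff_add_eq, add_comm]; exact hz
      calc w * z = w * (1 - z * y * x) := by rw [← hz2]
        _ = w * (-(z * y)) * x + w := by noncomm_ring
        _ = 1 := hw
    have hw' : w = 1 + y * x := by
      calc w = w * (z * (1 + y * x)) := by rw [hz1, mul_one]
        _ = w * z * (1 + y * x) := by rw [mul_assoc]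
        _ = 1 + y * x := by rw [hwz, one_mul]
    exact aux_isUnit_of_left_right hz1 (by rw [← hw', hwz])
  · intro h
    rw [TwoSidedIdeal.mem_jacobson_iff]
    intro y
    obtain ⟨u, hu⟩ := h y
    refine ⟨↑u⁻¹, ?_⟩
    rw [TwoSidedIdeal.mem_bot, sub_eq_zero]
    calc (↑u⁻¹ : B) * y * x + ↑u⁻¹ = ↑u⁻¹ * (1 + y * x) := by noncomm_ring
      _ = 1 := by rw [← hu, Units.inv_mul]

lemma aux_isUnit_of_map (φ : B →+* C)
    (hker : ∀ x, φ x = 0 → ∀ y, IsUnit (1 + y * x)) (hs : Function.Surjective φ)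
    {u : B} (hu : IsUnit (φ u)) : IsUnit u := by
  obtain ⟨v, hv⟩ := hu
  obtain ⟨w, hw⟩ := hs ↑v⁻¹
  have h1 : φ (u * w - 1) = 0 := by
    rw [map_sub, map_mul, map_one, hw, ← hv, Units.mul_inv, sub_self]
  have h2 : φ (w * u - 1) = 0 := by
    rw [map_sub, map_mul, map_one, hw, ← hv, Units.inv_mul, sub_self]
  have hu1 : IsUnit (u * w) := by
    have := hker _ h1 1
    rwa [one_mul, add_sub_cancel] at this
  have hu2 : IsUnit (w * u) := by
    have := hker _ h2 1
    rwa [one_mul, add_sub_cancel] at this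
  obtain ⟨a, ha⟩ := hu1
  obtain ⟨b, hb⟩ := hu2
  refine aux_isUnit_of_left_right (l := ↑b⁻¹ * w) (r := w * ↑a⁻¹) ?_ ?_
  · rw [mul_assoc, ← hb, Units.inv_mul]
  · rw [← mul_assoc, ← ha, Units.mul_inv]

/-- Quotient of a ring by a two-sided ideal that is the kernel of a surjective hom. -/
noncomputable def aux_quotEquivOfKer (I : TwoSidedIdeal B) (φ : B →+* C)
    (hs : Function.Surjective φ) (hker : ∀ x, φ x = 0 ↔ x ∈ I) :
    I.ringCon.Quotient ≃+* C := by
  have hresp : ∀ a b, I.ringCon a b → φ a = φ b := by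
    intro a b hab
    have h1 : a - b ∈ I := (I.rel_iff a b).1 hab
    have h2 := (hker _).2 h1
    rw [map_sub, sub_eq_zero] at h2
    exact h2
  let f : I.ringCon.Quotient →+* C :=
    { toFun := Quotient.lift φ hresp
      map_one' := map_one φ
      map_mul' := fun x y => Quotient.inductionOn₂ x y fun a b => map_mul φ a b
      map_zero' := map_zero φ
      map_add' := fun x y => Quotient.inductionOn₂ x y fun a b => map_add φ a b }
  refine RingEquiv.ofBijective f ⟨?_, ?_⟩
  · intro x y h
    induction x using Quotient.inductionOn
    induction y using Quotient.inductionOn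
    rename_i a b
    have : φ a = φ b := h
    rw [← sub_eq_zero, ← map_sub] at this
    exact Quotient.sound ((I.rel_iff a b).2 ((hker _).1 this))
  · intro c
    obtain ⟨a, rfl⟩ := hs c
    exact ⟨I.ringCon.mk' a, rfl⟩

end Helpers



section Transfer
variable {B C : Type*} [Ring B] [Ring C]


lemma aux_ringCon_mk'_surjective {I : TwoSidedIdeal B} :
    Function.Surjective I.ringCon.mk' :=
  fun q => Quotient.inductionOn q fun a => ⟨a, rfl⟩

lemma aux_isSemilocal_of_hom (φ : B →+* C) (hs : Function.Surjective φ)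
    (hker : ∀ x, φ x = 0 → x ∈ TwoSidedIdeal.jacobson (⊥ : TwoSidedIdeal B))
    (hC : IsSemilocalRing C) : IsSemilocalRing B := by
  set JB := TwoSidedIdeal.jacobson (⊥ : TwoSidedIdeal B) with hJB
  set JC := TwoSidedIdeal.jacobson (⊥ : TwoSidedIdeal C) with hJC
  have hker' : ∀ x, φ x = 0 → ∀ y, IsUnit (1 + y * x) := fun x hx y =>
    aux_mem_jacobson_bot_iff.1 (hker x hx) y
  have hcorr : ∀ x, x ∈ JB ↔ φ x ∈ JC := by
    intro x
    rw [hJB, hJC, aux_mem_jacobson_bot_iff, aux_mem_jacobson_bot_iff]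
    constructor
    · intro hx y'
      obtain ⟨y, rfl⟩ := hs y'
      have : IsUnit (φ (1 + y * x)) := (hx y).map φ
      rwa [map_add, map_one, map_mul] at this
    · intro hx y
      refine aux_isUnit_of_map φ hker' hs ?_
      rw [map_add, map_one, map_mul]
      exact hx (φ y)
  let ψ := JC.ringCon.mk'.comp φ
  have hψs : Function.Surjective ψ := aux_ringCon_mk'_surjective.comp hs
  have hψker : ∀ x, ψ x = 0 ↔ x ∈ JB := by
    intro x
    rw [hcorr]
    show ((φ x : JC.ringCon.Quotient) = ((0 : C) : JC.ringCon.Quotient)) ↔ _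
    rw [RingCon.eq, JC.rel_iff, sub_zero]
  have e := aux_quotEquivOfKer JB ψ hψs hψker
  unfold IsSemilocalRing at hC ⊢
  haveI : IsSemisimpleRing JC.ringCon.Quotient := hC
  exact e.symm.isSemisimpleRing

end Transfer



lemma aux_asIdeal_bot {B : Type*} [Ring B] :
    TwoSidedIdeal.asIdeal (⊥ : TwoSidedIdeal B) = ⊥ := by
  ext x
  rw [TwoSidedIdeal.mem_asIdeal, TwoSidedIdeal.mem_bot, Ideal.mem_bot]

lemma aux_mem_twoSided_jacobson_bot {B : Type*} [Ring B] {x : B} :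
    x ∈ TwoSidedIdeal.jacobson (⊥ : TwoSidedIdeal B) ↔ x ∈ Ideal.jacobson (⊥ : Ideal B) := by
  rw [← TwoSidedIdeal.mem_asIdeal, TwoSidedIdeal.asIdeal_jacobson, aux_asIdeal_bot]

lemma aux_isSemilocal_of_artinian (B : Type*) [Ring B] [IsArtinianRing B] :
    IsSemilocalRing B := by
  classical
  unfold IsSemilocalRing
  set Jt := TwoSidedIdeal.jacobson (⊥ : TwoSidedIdeal B) with hJt
  set I : Ideal B := Ideal.jacobson ⊥ with hI
  -- semisimplicity of B ⧸ I as a B-module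
  have hBI : IsSemisimpleModule B (B ⧸ I) := by
    rcases subsingleton_or_nontrivial B with hB | hB
    · haveI : Subsingleton (B ⧸ I) := Quotient.instSubsingletonQuotient _
      exact (isSemisimpleModule_iff B (B ⧸ I)).mpr ⟨fun a => ⟨⊥, by rw [Subsingleton.elim a ⊤]; exact isCompl_top_bot⟩⟩
    · -- find a finite family of maximal ideals with inf ≤ I
      let S : Set (Ideal B) := {J | ∃ s : Finset (Ideal B), (∀ m ∈ s, m.IsMaximal) ∧ J = s.inf id}
      have hne : S.Nonempty := ⟨⊤, ∅, by simp, by simp⟩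
      obtain ⟨I₀, ⟨s, hs, rfl⟩, hmin⟩ := IsArtinian.set_has_minimal S hne
      have hI0 : s.inf id ≤ I := by
        rw [hI, Ideal.jacobson]
        refine le_sInf ?_
        rintro m ⟨-, hm⟩
        by_contra hlt
        have h' : s.inf id ⊓ m < s.inf id :=
          lt_of_le_of_ne inf_le_left fun h => hlt (h ▸ inf_le_right)
        refine hmin _ ⟨insert m s, ?_, ?_⟩ h'
        · intro m' hm'
          rcases Finset.mem_insert.1 hm' with rfl | hm'
          · exact hm
          · exact hs m' hm'
        · rw [Finset.inf_insert, inf_comm]; rfl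
      -- the embedding into a product of simple modules
      have hle : ∀ m : s, I ≤ (m : Ideal B) := fun m =>
        sInf_le ⟨bot_le, hs m m.2⟩
      let l : (B ⧸ I) →ₗ[B] (∀ m : s, B ⧸ (m : Ideal B)) :=
        LinearMap.pi fun m => Submodule.mapQ I (m : Ideal B) LinearMap.id (hle m)
      have hinj : Function.Injective l := by
        rw [← LinearMap.ker_eq_bot, eq_bot_iff]
        rintro x hx
        obtain ⟨b, rfl⟩ := Submodule.Quotient.mk_surjective I x
        rw [LinearMap.mem_ker] at hx
        have hb : ∀ m : s, b ∈ (m : Ideal B) := by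
          intro m
          have := congr_fun hx m
          rwa [Pi.zero_apply, LinearMap.pi_apply, Submodule.mapQ_apply, LinearMap.id_apply,
            Submodule.Quotient.mk_eq_zero] at this
        have : b ∈ s.inf id := by
          rw [Submodule.mem_finsetInf]
          exact fun i hi => hb ⟨i, hi⟩
        rw [Submodule.mem_bot, Submodule.Quotient.mk_eq_zero]
        exact hI0 this
      haveI : ∀ m : s, IsSimpleModule B (B ⧸ (m : Ideal B)) := fun m =>
        isSimpleModule_iff_isCoatom.2 (Ideal.isMaximal_def.1 (hs m m.2))
      haveI : ∀ m : s, IsSemisimpleModule B (B ⧸ (m : Ideal B)) := fun m => inferInstance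
      haveI hpi : IsSemisimpleModule B (∀ m : s, B ⧸ (m : Ideal B)) := by
        refine isSemisimpleModule_of_isSemisimpleModule_submodule'
          (p := fun i => LinearMap.range (LinearMap.single B _ i)) (fun i => .range _) ?_
        simp_rw [LinearMap.range_eq_map, Submodule.iSup_map_single, Submodule.pi_top]
      exact IsSemisimpleModule.congr (M := ↥(LinearMap.range l)) (LinearEquiv.ofInjective l hinj)
  -- transfer to the ring-congruence quotient
  have hII : ∀ x, x ∈ I ↔ x ∈ Jt := fun x => by
    rw [hJt, ← TwoSidedIdeal.mem_asIdeal, TwoSidedIdeal.asIdeal_jacobson, aux_asIdeal_bot, hI]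
  let σ : B →+* Jt.ringCon.Quotient := Jt.ringCon.mk'
  have hσs : Function.Surjective σ := fun q => Quotient.inductionOn q fun a => ⟨a, rfl⟩
  haveI : RingHomSurjective σ := ⟨hσs⟩
  have hresp : ∀ a b : B, Submodule.quotientRel I a b → σ a = σ b := by
    intro a b hab
    have h1 : a - b ∈ I := (Submodule.quotientRel_def I).1 hab
    exact (RingCon.eq _).2 ((Jt.rel_iff a b).2 ((hII _).1 h1))
  let l2 : (B ⧸ I) →ₛₗ[σ] Jt.ringCon.Quotient :=
    { toFun := fun x => Quotient.lift σ hresp x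
      map_add' := fun x y => Quotient.inductionOn₂ x y fun a b => map_add σ a b
      map_smul' := fun b x => Quotient.inductionOn x fun c => by
        show σ (b * c) = σ b * σ c
        exact map_mul σ b c }
  have hbij : Function.Bijective l2 := by
    constructor
    · intro x y h
      induction x using Quotient.inductionOn
      induction y using Quotient.inductionOn
      rename_i a b
      have h1 : σ a = σ b := h
      have h2 : Jt.ringCon a b := Jt.ringCon.eq.1 h1
      exact (Submodule.Quotient.eq I).2 ((hII _).2 ((Jt.rel_iff a b).1 h2))
    · intro q
      obtain ⟨a, rfl⟩ := hσs q
      exact ⟨Submodule.Quotient.mk a, rfl⟩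
  exact (l2.isSemisimpleModule_iff_of_bijective hbij).1 hBI


set_option maxHeartbeats 1600000 in
/-- Let `R` be a commutative semilocal ring, `S` a (not necessarily commutative)
`R`-algebra, and `M` an `S`-module that is finitely generated as an `R`-module. Then the
endomorphism ring `End_S(M)` is semilocal. -/
theorem isSemilocalRing_end_algebra_of_finite {R S M : Type*} [CommRing R] [Ring S]
    [Algebra R S] [AddCommGroup M] [Module S M] [Module R M] [IsScalarTower R S M]
    (hR : IsSemilocalRing R) [Module.Finite R M] :
    IsSemilocalRing (Module.End S M) := by
  classical
  have hcomm : ∀ (s : S) (r : R) (m : M), r • (s • m) = s • (r • m) := by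
    intro s r m
    rw [← algebraMap_smul S r (s • m), ← algebraMap_smul S r m, ← mul_smul, ← mul_smul,
      Algebra.commutes]
  haveI : SMulCommClass S R M := ⟨fun s r m => (hcomm s r m).symm⟩
  set J : Ideal R := Ideal.jacobson ⊥ with hJ
  set N : Submodule R M := J • ⊤ with hN
  -- the semisimple quotient ring k = R ⧸ J
  haveI hk : IsSemisimpleRing (R ⧸ J) := by
    have e := aux_quotEquivOfKer (TwoSidedIdeal.jacobson (⊥ : TwoSidedIdeal R))
      (Ideal.Quotient.mk J) Ideal.Quotient.mk_surjective (fun x => by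
        rw [Ideal.Quotient.eq_zero_iff_mem, aux_mem_twoSided_jacobson_bot, hJ])
    haveI : IsSemisimpleRing
        (TwoSidedIdeal.jacobson (⊥ : TwoSidedIdeal R)).ringCon.Quotient := hR
    exact e.isSemisimpleRing
  haveI : IsArtinianRing (R ⧸ J) := inferInstance
  haveI : IsScalarTower R (R ⧸ J) (M ⧸ N) :=
    Module.IsTorsionBySet.isScalarTower (Module.isTorsionBySet_quotient_ideal_smul M J)
  haveI : Module.Finite (R ⧸ J) (M ⧸ N) := Module.Finite.of_restrictScalars_finite R _ _
  haveI : IsArtinian (R ⧸ J) (M ⧸ N) := inferInstance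
  -- End (R⧸J) (M⧸N) is an artinian (R⧸J)-module
  obtain ⟨n, g, hg⟩ := Module.Finite.exists_fin (R := R ⧸ J) (M := M ⧸ N)
  haveI : IsArtinian (R ⧸ J) (Module.End (R ⧸ J) (M ⧸ N)) := by
    refine isArtinian_of_injective
      (LinearMap.pi fun i : Fin n => LinearMap.applyₗ (g i)) ?_
    intro f1 f2 h
    have key : ∀ f : Module.End (R ⧸ J) (M ⧸ N), (∀ i, f (g i) = 0) → f = 0 := by
      intro f hf
      refine LinearMap.ext fun x => ?_
      have hx : x ∈ Submodule.span (R ⧸ J) (Set.range g) := by rw [hg]; trivial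
      rw [LinearMap.zero_apply]
      refine Submodule.span_induction ?_ ?_ ?_ ?_ hx
      · rintro _ ⟨i, rfl⟩; exact hf i
      · exact map_zero f
      · intro a b _ _ ha hb; rw [map_add, ha, hb, add_zero]
      · intro c a _ ha; rw [map_smul, ha, smul_zero]
    have : f1 - f2 = 0 := by
      refine key _ fun i => ?_
      have htf : f1 (g i) = f2 (g i) := congr_fun h i
      rw [LinearMap.sub_apply, htf, sub_self]
    exact sub_eq_zero.1 this
  -- the ring homomorphism ψ : End_S(M) →+* End_{R⧸J}(M⧸N)
  have halg : Function.Surjective (algebraMap R (R ⧸ J)) := by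
    rw [Ideal.Quotient.algebraMap_eq]
    exact Ideal.Quotient.mk_surjective
  have hNle : ∀ f : Module.End S M, N ≤ N.comap (f.restrictScalars R) := by
    intro f
    rw [hN]
    refine Submodule.smul_le.2 fun j hj m _ => ?_
    rw [Submodule.mem_comap]
    have h1 : (f.restrictScalars R) (j • m) = j • f m := map_smul (f.restrictScalars R) j m
    rw [h1]
    exact Submodule.smul_mem_smul hj Submodule.mem_top
  let ψfun : Module.End S M → Module.End (R ⧸ J) (M ⧸ N) := fun f =>
    LinearMap.extendScalarsOfSurjective halg (Submodule.mapQ N N (f.restrictScalars R) (hNle f))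
  have hψfun : ∀ (f : Module.End S M) (m : M),
      ψfun f (Submodule.Quotient.mk m) = Submodule.Quotient.mk (f m) := by
    intro f m
    show LinearMap.extendScalarsOfSurjective halg
      (Submodule.mapQ N N (f.restrictScalars R) (hNle f)) (Submodule.Quotient.mk m) = _
    rw [LinearMap.extendScalarsOfSurjective_apply, Submodule.mapQ_apply]
    rfl
  let ψ : Module.End S M →+* Module.End (R ⧸ J) (M ⧸ N) :=
    { toFun := ψfun
      map_one' := by
        refine LinearMap.ext fun x => ?_
        obtain ⟨m, rfl⟩ := Submodule.Quotient.mk_surjective N x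
        rw [hψfun]; rfl
      map_mul' := fun f g => by
        refine LinearMap.ext fun x => ?_
        obtain ⟨m, rfl⟩ := Submodule.Quotient.mk_surjective N x
        rw [Module.End.mul_apply, hψfun, hψfun, hψfun, Module.End.mul_apply]
      map_zero' := by
        refine LinearMap.ext fun x => ?_
        obtain ⟨m, rfl⟩ := Submodule.Quotient.mk_surjective N x
        rw [hψfun]; rfl
      map_add' := fun f g => by
        refine LinearMap.ext fun x => ?_
        obtain ⟨m, rfl⟩ := Submodule.Quotient.mk_surjective N x
        rw [LinearMap.add_apply, hψfun, hψfun, hψfun, LinearMap.add_apply,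
          Submodule.Quotient.mk_add] }
  have hψ : ∀ (f : Module.End S M) (m : M),
      ψ f (Submodule.Quotient.mk m) = Submodule.Quotient.mk (f m) := hψfun
  -- every scalar multiple of the identity is in the range of ψ
  have hone : ∀ κ : R ⧸ J, ∃ a : Module.End S M,
      ψ a = κ • (1 : Module.End (R ⧸ J) (M ⧸ N)) := by
    intro κ
    obtain ⟨r, rfl⟩ := Ideal.Quotient.mk_surjective κ
    refine ⟨r • 1, ?_⟩
    refine LinearMap.ext fun x => ?_
    obtain ⟨m, rfl⟩ := Submodule.Quotient.mk_surjective N x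
    rw [hψ, LinearMap.smul_apply, LinearMap.smul_apply, Module.End.one_apply,
      Module.End.one_apply]
    rfl
  -- the image of ψ is an artinian ring
  have hsm : ∀ (T : Submodule ψ.range ψ.range) (κ : R ⧸ J) (x : Module.End (R ⧸ J) (M ⧸ N)),
      x ∈ Subtype.val '' (T : Set ψ.range) → κ • x ∈ Subtype.val '' (T : Set ψ.range) := by
    rintro T κ _ ⟨t, ht, rfl⟩
    obtain ⟨a, ha⟩ := hone κ
    refine ⟨(⟨κ • 1, ⟨a, ha⟩⟩ : ψ.range) * t, T.smul_mem _ ht, ?_⟩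
    show (κ • (1 : Module.End (R ⧸ J) (M ⧸ N))) * ↑t = κ • ↑t
    rw [smul_mul_assoc, one_mul]
  let omap : Submodule ψ.range ψ.range → Submodule (R ⧸ J) (Module.End (R ⧸ J) (M ⧸ N)) :=
    fun T =>
    { carrier := Subtype.val '' (T : Set ψ.range)
      add_mem' := by rintro _ _ ⟨a, ha, rfl⟩ ⟨b, hb, rfl⟩; exact ⟨a + b, T.add_mem ha hb, rfl⟩
      zero_mem' := ⟨0, T.zero_mem, rfl⟩
      smul_mem' := hsm T }
  have homap : ∀ T T' : Submodule ψ.range ψ.range, omap T ≤ omap T' ↔ T ≤ T' := by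
    intro T T'
    constructor
    · intro h x hx
      obtain ⟨y, hy, hxy⟩ := h ⟨x, hx, rfl⟩
      rwa [show y = x from Subtype.val_injective hxy] at hy
    · rintro h _ ⟨a, ha, rfl⟩
      exact ⟨a, h ha, rfl⟩
  haveI : IsArtinian ψ.range ψ.range :=
    OrderEmbedding.wellFoundedLT
      { toFun := omap
        inj' := fun T T' h => le_antisymm ((homap _ _).1 h.le) ((homap _ _).1 h.ge)
        map_rel_iff' := homap _ _ }
  have hA : IsSemilocalRing ψ.range := aux_isSemilocal_of_artinian ψ.range
  -- the kernel of ψ is contained in the Jacobson radical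
  have hker : ∀ f : Module.End S M, ψ.rangeRestrict f = 0 →
      f ∈ TwoSidedIdeal.jacobson (⊥ : TwoSidedIdeal (Module.End S M)) := by
    intro f hf
    have hf0 : ψ f = 0 := by
      have := congrArg Subtype.val hf
      simpa using this
    have hfN : ∀ m : M, f m ∈ N := by
      intro m
      have h1 : ψ f (Submodule.Quotient.mk m) = 0 := by rw [hf0]; rfl
      rw [hψ, Submodule.Quotient.mk_eq_zero] at h1
      exact h1
    rw [aux_mem_jacobson_bot_iff]
    intro y
    set u : Module.End S M := 1 + y * f with hu
    have huI : ∀ m : M, u m - m ∈ N := by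
      intro m
      have h2 : u m = m + y (f m) := by
        rw [hu, LinearMap.add_apply, Module.End.one_apply, Module.End.mul_apply]
      rw [h2, add_sub_cancel_left]
      exact hNle y (hfN m)
    -- u is surjective by Nakayama
    have hsurj : LinearMap.range (u.restrictScalars R) = ⊤ := by
      have hNN : (⊤ : Submodule R M) ≤ LinearMap.range (u.restrictScalars R) ⊔ J • ⊤ := by
        intro m _
        have h3 : m = u m - (u m - m) := (sub_sub_cancel _ _).symm
        rw [h3]
        exact Submodule.sub_mem _ (Submodule.mem_sup_left ⟨m, rfl⟩)
          (Submodule.mem_sup_right (hN ▸ huI m))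
      have h4 := Submodule.sup_eq_sup_smul_of_le_smul_of_le_jacobson
        (I := J) (J := ⊥) (N := LinearMap.range (u.restrictScalars R)) (N' := ⊤)
        Module.Finite.fg_top (hJ ▸ le_rfl) hNN
      rw [sup_top_eq, Submodule.bot_smul, sup_bot_eq] at h4
      exact h4.symm
    -- u is injective since M is a finite module over a commutative ring
    have hbij : Function.Bijective u := by
      have hsurj' : Function.Surjective (u.restrictScalars R) := by
        rw [← LinearMap.range_eq_top]
        exact hsurj
      exact ⟨OrzechProperty.injective_of_surjective_endomorphism
        (u.restrictScalars R) hsurj', hsurj'⟩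
    exact (Module.End.isUnit_iff u).2 hbij
  exact aux_isSemilocal_of_hom ψ.rangeRestrict ψ.rangeRestrict_surjective hker hA
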